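/- arXiv:2106.04480 — 2 statements merged into one kernel-verified Lean document; each statement's English description precedes it below -/
import Mathlib

section
/- For a fixed finite sequence in which state s occurs exactly k ≥ 2 times, if the middle block counts of s' are all equal, n_1(s') = n_2(s') = … = n_{k-1}(s'), then #(s→s') − #(s'→s) = k · (n_k(s') − n_0(s')). -/
open Finset

/-- `#(s→s')`: number of index pairs `i < j` with `f i = s` and `f j = s'`. -/
def pairCount {S : Type*} [DecidableEq S] {n : ℕ} (f : Fin n → S) (s s' : S) : ℕ :=
  ((Finset.univ : Finset (Fin n × Fin n)).filter
    (fun p => p.1 < p.2 ∧ f p.1 = s ∧ f p.2 = s')).card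

/-- `n_i(s')`: number of occurrences of `s'` in the `i`-th block, i.e. positions `j`
with `f j = s'` preceded by exactly `i` occurrences of `s`. -/
def blockCount {S : Type*} [DecidableEq S] {n : ℕ} (f : Fin n → S) (s s' : S) (i : ℕ) : ℕ :=
  ((Finset.univ : Finset (Fin n)).filter
    (fun j => f j = s' ∧ ((Finset.univ : Finset (Fin n)).filter
      (fun l => l < j ∧ f l = s)).card = i)).card

private lemma pc_fwd {S : Type*} [DecidableEq S] {n : ℕ} (f : Fin n → S) (s s' : S) :
    pairCount f s s' = ∑ j ∈ (univ : Finset (Fin n)).filter (fun j => f j = s'),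
      ((univ : Finset (Fin n)).filter (fun l => l < j ∧ f l = s)).card := by
  classical
  rw [pairCount, Finset.card_filter, Fintype.sum_prod_type, Finset.sum_comm, Finset.sum_filter]
  refine Finset.sum_congr rfl fun j _ => ?_
  by_cases h : f j = s'
  · rw [Finset.card_filter, if_pos h]; exact Finset.sum_congr rfl fun i _ => by simp [h]
  · simp [h]

private lemma pc_bwd {S : Type*} [DecidableEq S] {n : ℕ} (f : Fin n → S) (s s' : S) :
    pairCount f s' s = ∑ j ∈ (univ : Finset (Fin n)).filter (fun j => f j = s'),
      ((univ : Finset (Fin n)).filter (fun l => j < l ∧ f l = s)).card := by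
  classical
  rw [pairCount, Finset.card_filter, Fintype.sum_prod_type, Finset.sum_filter]
  refine Finset.sum_congr rfl fun j _ => ?_
  by_cases h : f j = s'
  · rw [Finset.card_filter, if_pos h]; exact Finset.sum_congr rfl fun i _ => by simp [h]
  · simp [h]

private lemma csplit {S : Type*} [DecidableEq S] {n : ℕ} (f : Fin n → S) (s s' : S)
    (hss' : s ≠ s') (k : ℕ)
    (hk : ((univ : Finset (Fin n)).filter (fun j => f j = s)).card = k)
    (j : Fin n) (hj : f j = s') :
    ((univ : Finset (Fin n)).filter (fun l => l < j ∧ f l = s)).card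
      + ((univ : Finset (Fin n)).filter (fun l => j < l ∧ f l = s)).card = k := by
  classical
  rw [← Finset.card_union_of_disjoint]
  · rw [← hk]; congr 1
    ext l
    simp only [Finset.mem_union, Finset.mem_filter, Finset.mem_univ, true_and]
    constructor
    · rintro (⟨-, h⟩ | ⟨-, h⟩) <;> exact h
    · intro h
      rcases lt_trichotomy l j with h' | h' | h'
      · exact Or.inl ⟨h', h⟩
      · subst h'; rw [hj] at h; exact absurd h.symm hss'
      · exact Or.inr ⟨h', h⟩
  · rw [Finset.disjoint_left]
    intro l h1 h2
    simp only [Finset.mem_filter] at h1 h2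
    exact absurd (h1.2.1.trans h2.2.1) (lt_irrefl l)

private lemma gauss_mid (k : ℕ) (hk : 1 ≤ k) :
    ∑ i ∈ Finset.Ico 1 k, (2 * (i : ℤ) - k) = 0 := by
  have h1 : ∑ i ∈ Finset.Ico 1 k, (i : ℤ) = ∑ i ∈ Finset.range k, (i : ℤ) := by
    rw [Finset.range_eq_Ico, Finset.sum_eq_sum_Ico_succ_bot hk]
    simp
  have h2 : (∑ i ∈ Finset.range k, (i : ℤ)) * 2 = k * (k - 1) := by
    have h := Finset.sum_range_id_mul_two k
    have h' := congrArg (Nat.cast : ℕ → ℤ) h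
    push_cast [Nat.cast_sub hk] at h'
    linarith
  have hc : (Finset.Ico 1 k).card = k - 1 := by simp
  rw [Finset.sum_sub_distrib, ← Finset.mul_sum, h1, Finset.sum_const, hc]
  simp only [nsmul_eq_mul]
  push_cast [Nat.cast_sub hk]
  linarith

/-- if `s` occurs exactly `k ≥ 2` times in `f` and the middle block
counts `n_1(s') = … = n_{k-1}(s')` are all equal, then
`#(s→s') − #(s'→s) = k · (n_k(s') − n_0(s'))`. -/
theorem pairCount_sub_pairCount_swap {S : Type*} [DecidableEq S] {n : ℕ}
    (f : Fin n → S) (s s' : S) (hss' : s ≠ s') (k : ℕ) (hk2 : 2 ≤ k)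
    (hk : ((Finset.univ : Finset (Fin n)).filter (fun j => f j = s)).card = k)
    (hmid : ∀ i j : ℕ, 1 ≤ i → i ≤ k - 1 → 1 ≤ j → j ≤ k - 1 →
      blockCount f s s' i = blockCount f s s' j) :
    (pairCount f s s' : ℤ) - (pairCount f s' s : ℤ) =
      (k : ℤ) * ((blockCount f s s' k : ℤ) - (blockCount f s s' 0 : ℤ)) := by
  classical
  have hk1 : 1 ≤ k := le_trans (by norm_num) hk2
  set T := (univ : Finset (Fin n)).filter (fun j => f j = s') with hT
  set c : Fin n → ℕ := fun j => ((univ : Finset (Fin n)).filter (fun l => l < j ∧ f l = s)).card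
    with hc
  -- Step 1: difference as a single sum
  have step1 : (pairCount f s s' : ℤ) - (pairCount f s' s : ℤ)
      = ∑ j ∈ T, (2 * (c j : ℤ) - k) := by
    rw [pc_fwd f s s', pc_bwd f s s']
    push_cast
    rw [← Finset.sum_sub_distrib]
    refine Finset.sum_congr rfl fun j hj => ?_
    have hj' : f j = s' := (Finset.mem_filter.mp hj).2
    have := csplit f s s' hss' k hk j hj'
    have : (c j : ℤ) + (((univ : Finset (Fin n)).filter (fun l => j < l ∧ f l = s)).card : ℤ)
        = k := by exact_mod_cast this
    linarith
  -- Step 2: fiberwise decomposition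
  have hmaps : ∀ j ∈ T, c j ∈ Finset.range (k+1) := by
    intro j _
    simp only [Finset.mem_range, Nat.lt_succ_iff, ← hk]
    refine Finset.card_le_card fun l hl => ?_
    simp only [Finset.mem_filter] at hl ⊢
    exact ⟨hl.1, hl.2.2⟩
  have step2 : ∑ j ∈ T, (2 * (c j : ℤ) - k)
      = ∑ i ∈ Finset.range (k+1), (blockCount f s s' i : ℤ) * (2 * i - k) := by
    rw [← Finset.sum_fiberwise_of_maps_to hmaps]
    refine Finset.sum_congr rfl fun i hi => ?_
    have heq : ∀ j ∈ T.filter (fun j => c j = i),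
        (2 * (c j : ℤ) - k) = 2 * (i : ℤ) - k := by
      intro j hj
      rw [(Finset.mem_filter.mp hj).2]
    rw [Finset.sum_congr rfl heq, Finset.sum_const, blockCount, Finset.filter_filter]
    push_cast
    ring
  -- Step 3: split off i = 0 and i = k, collapse middle
  have step3 : ∑ i ∈ Finset.range (k+1), (blockCount f s s' i : ℤ) * (2 * i - k)
      = (blockCount f s s' 0 : ℤ) * (0 - k) + (blockCount f s s' k : ℤ) * (2 * k - k)
        + ∑ i ∈ Finset.Ico 1 k, (blockCount f s s' i : ℤ) * (2 * i - k) := by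
    rw [Finset.sum_range_succ, Finset.range_eq_Ico,
      Finset.sum_eq_sum_Ico_succ_bot (lt_of_lt_of_le (by norm_num) hk1)]
    push_cast
    ring
  have hmid' : ∑ i ∈ Finset.Ico 1 k, (blockCount f s s' i : ℤ) * (2 * i - k) = 0 := by
    have : ∀ i ∈ Finset.Ico 1 k, (blockCount f s s' i : ℤ) * (2 * i - k)
        = (blockCount f s s' 1 : ℤ) * (2 * i - k) := by
      intro i hi
      simp only [Finset.mem_Ico] at hi
      rw [hmid i 1 hi.1 (by omega) (by norm_num) (by omega)]
    rw [Finset.sum_congr rfl this]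
    have := gauss_mid k hk1
    calc ∑ i ∈ Finset.Ico 1 k, (blockCount f s s' 1 : ℤ) * (2 * i - k)
        = (blockCount f s s' 1 : ℤ) * ∑ i ∈ Finset.Ico 1 k, (2 * (i : ℤ) - k) := by
          rw [Finset.mul_sum]
      _ = 0 := by rw [this, mul_zero]
  rw [step1, step2, step3, hmid']
  ring
end

section
/- Let π be a policy with π(a|s) ≥ ρ > 0 for all s, a, and let φ_{π,K}(s,a) = p_π(s ∈ τ_{t+1:t+K+1} | s_t = s, a_t = a) and φ_K(s,a) = sup_{π'} φ_{π',K}(s,a). Then φ_{π,K}(s,a) ≥ ρ^K · φ_K(s,a). -/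
open Finset

/-- Probability of a given `K`-step state path `(s_{t+1}, …, s_{t+K+1})` after the
transition `(s, a)`, under transition kernel `P` and policy `pol`. -/
def pathProb {S A : Type*} [Fintype A] (P : S → A → S → ℝ) (pol : S → A → ℝ)
    (s : S) (a : A) {K : ℕ} (path : Fin (K + 1) → S) : ℝ :=
  P s a (path 0) *
    ∏ i : Fin K, ∑ b : A, pol (path i.castSucc) b * P (path i.castSucc) b (path i.succ)

/-- `φ_{pol,K}(s,a) = p_pol(s ∈ τ_{t+1:t+K+1} | s_t = s, a_t = a)`: the probability,
following policy `pol` after the transition `(s, a)`, of returning to `s` within the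
next `K+1` visited states. -/
def phiPol {S A : Type*} [Fintype S] [Fintype A] [DecidableEq S]
    (P : S → A → S → ℝ) (pol : S → A → ℝ) (K : ℕ) (s : S) (a : A) : ℝ :=
  ∑ path ∈ (Finset.univ : Finset (Fin (K + 1) → S)).filter (fun path => ∃ i, path i = s),
    pathProb P pol s a path

/-- A valid (stochastic) policy. -/
def IsPolicy {S A : Type*} [Fintype A] (pol : S → A → ℝ) : Prop :=
  (∀ s a, 0 ≤ pol s a) ∧ ∀ s, ∑ a, pol s a = 1

lemma pathProb_key {S A : Type*} [Fintype A] (P : S → A → S → ℝ)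
    (hP0 : ∀ s a s', 0 ≤ P s a s')
    (pi pol : S → A → ℝ) (hpol : IsPolicy pol) (ρ : ℝ) (hρ : 0 < ρ)
    (hpi : ∀ s a, ρ ≤ pi s a)
    (s : S) (a : A) {K : ℕ} (path : Fin (K + 1) → S) :
    ρ ^ K * pathProb P pol s a path ≤ pathProb P pi s a path := by
  unfold pathProb
  rw [mul_left_comm]
  have hterm : ∀ (u v : S), ρ * ∑ b : A, pol u b * P u b v ≤ ∑ b : A, pi u b * P u b v := by
    intro u v
    rw [Finset.mul_sum]
    apply Finset.sum_le_sum
    intro b _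
    have h1 : pol u b ≤ 1 := by
      have := hpol.2 u
      calc pol u b ≤ ∑ c : A, pol u c :=
            Finset.single_le_sum (fun c _ => hpol.1 u c) (Finset.mem_univ b)
        _ = 1 := this
    have hPn := hP0 u b v
    calc ρ * (pol u b * P u b v) = (ρ * pol u b) * P u b v := by ring
      _ ≤ (ρ * 1) * P u b v := by
          apply mul_le_mul_of_nonneg_right _ hPn
          exact mul_le_mul_of_nonneg_left h1 hρ.le
      _ = ρ * P u b v := by ring
      _ ≤ pi u b * P u b v := mul_le_mul_of_nonneg_right (hpi u b) hPn
  have hprod : ρ ^ K * ∏ i : Fin K, ∑ b : A,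
      pol (path i.castSucc) b * P (path i.castSucc) b (path i.succ) ≤
      ∏ i : Fin K, ∑ b : A, pi (path i.castSucc) b * P (path i.castSucc) b (path i.succ) := by
    have : ρ ^ K = ∏ _i : Fin K, ρ := by simp
    rw [this, ← Finset.prod_mul_distrib]
    apply Finset.prod_le_prod
    · intro i _
      apply mul_nonneg hρ.le
      exact Finset.sum_nonneg fun b _ => mul_nonneg (hpol.1 _ b) (hP0 _ _ _)
    · intro i _
      exact hterm _ _
  exact mul_le_mul_of_nonneg_left hprod (hP0 s a (path 0))

lemma phiPol_key {S A : Type*} [Fintype S] [Fintype A] [DecidableEq S]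
    (P : S → A → S → ℝ) (hP0 : ∀ s a s', 0 ≤ P s a s')
    (pi pol : S → A → ℝ) (hpol : IsPolicy pol) (ρ : ℝ) (hρ : 0 < ρ)
    (hpi : ∀ s a, ρ ≤ pi s a) (K : ℕ) (s : S) (a : A) :
    ρ ^ K * phiPol P pol K s a ≤ phiPol P pi K s a := by
  unfold phiPol
  rw [Finset.mul_sum]
  exact Finset.sum_le_sum fun path _ =>
    pathProb_key P hP0 pi pol hpol ρ hρ hpi s a path

lemma phiPol_nonneg {S A : Type*} [Fintype S] [Fintype A] [DecidableEq S]
    (P : S → A → S → ℝ) (hP0 : ∀ s a s', 0 ≤ P s a s')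
    (pol : S → A → ℝ) (hpol : IsPolicy pol) (K : ℕ) (s : S) (a : A) :
    0 ≤ phiPol P pol K s a := by
  apply Finset.sum_nonneg
  intro path _
  exact mul_nonneg (hP0 _ _ _) (Finset.prod_nonneg fun i _ =>
    Finset.sum_nonneg fun b _ => mul_nonneg (hpol.1 _ b) (hP0 _ _ _))

/-- if `π(a|s) ≥ ρ > 0` everywhere, then
`φ_{π,K}(s,a) ≥ ρ^K · φ_K(s,a)` where `φ_K(s,a) = sup_{π'} φ_{π',K}(s,a)`. -/
theorem phiPol_ge_rho_pow_mul_sup {S A : Type*} [Fintype S] [Fintype A] [DecidableEq S]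
    (P : S → A → S → ℝ) (hP0 : ∀ s a s', 0 ≤ P s a s') (hP1 : ∀ s a, ∑ s', P s a s' = 1)
    (pi : S → A → ℝ) (hpol : IsPolicy pi) (ρ : ℝ) (hρ : 0 < ρ)
    (hpi : ∀ s a, ρ ≤ pi s a)
    (K : ℕ) (s : S) (a : A) :
    ρ ^ K * sSup {x : ℝ | ∃ pol : S → A → ℝ, IsPolicy pol ∧ x = phiPol P pol K s a} ≤
      phiPol P pi K s a := by
  have hρK : (0:ℝ) < ρ ^ K := pow_pos hρ K
  have hphi : 0 ≤ phiPol P pi K s a := phiPol_nonneg P hP0 pi hpol K s a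
  have hsup : sSup {x : ℝ | ∃ pol : S → A → ℝ, IsPolicy pol ∧ x = phiPol P pol K s a} ≤
      phiPol P pi K s a / ρ ^ K := by
    apply Real.sSup_le
    · rintro x ⟨pol, hp, rfl⟩
      rw [le_div_iff₀ hρK, mul_comm]
      exact phiPol_key P hP0 pi pol hp ρ hρ hpi K s a
    · positivity
  calc ρ ^ K * sSup _ ≤ ρ ^ K * (phiPol P pi K s a / ρ ^ K) :=
        mul_le_mul_of_nonneg_left hsup hρK.le
    _ = phiPol P pi K s a := by field_simp
end
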